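/- Let X have the negative Weibull distribution with parameters α > 0, μ ∈ ℝ, σ > 0. Then p_eL(X) = exp(−[4·(log 4)^{1/α} − 3·(log(4/3))^{1/α}]^α). -/

import Mathlib

open MeasureTheory Real

variable {Ω : Type*} [MeasurableSpace Ω]

/-- Generalized inverse of the c.d.f.: `F⁻(p) = inf {x : F(x) ≥ p}`. -/
noncomputable def quantile (μ : Measure Ω) (X : Ω → ℝ) (p : ℝ) : ℝ :=
  sInf {x : ℝ | p ≤ (μ {ω | X ω ≤ x}).toReal}

noncomputable def Q1 (μ : Measure Ω) (X : Ω → ℝ) : ℝ := quantile μ X (1/4)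

noncomputable def Q3 (μ : Measure Ω) (X : Ω → ℝ) : ℝ := quantile μ X (3/4)

noncomputable def IQR (μ : Measure Ω) (X : Ω → ℝ) : ℝ := Q3 μ X - Q1 μ X

/-- Probability of a left extreme outlier. -/
noncomputable def peL (μ : Measure Ω) (X : Ω → ℝ) : ℝ :=
  (μ {ω | X ω < Q1 μ X - 3 * IQR μ X}).toReal

/-- Probability of a right extreme outlier. -/
noncomputable def peR (μ : Measure Ω) (X : Ω → ℝ) : ℝ :=
  (μ {ω | Q3 μ X + 3 * IQR μ X < X ω}).toReal

noncomputable def pe2 (μ : Measure Ω) (X : Ω → ℝ) : ℝ := peL μ X + peR μ X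

lemma negweib_quantile (μ : Measure Ω) [IsProbabilityMeasure μ]
    (X : Ω → ℝ) (α m σ : ℝ) (ha : 0 < α) (hs : 0 < σ)
    (hcdf : ∀ x : ℝ, x < m →
      (μ {ω | X ω ≤ x}).toReal = Real.exp (-(-(x - m) / σ) ^ α))
    (p : ℝ) (hp0 : 0 < p) (hp1 : p < 1) :
    quantile μ X p = m - σ * (Real.log (1/p)) ^ (1/α) := by
  set L := Real.log (1/p) with hLdef
  have hLpos : 0 < L := by
    apply Real.log_pos
    rw [lt_div_iff₀ hp0]; linarith
  have hLa : 0 < L ^ (1/α) := Real.rpow_pos_of_pos hLpos _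
  set x0 := m - σ * L ^ (1/α) with hx0def
  have hx0m : x0 < m := by
    rw [hx0def]; linarith [mul_pos hs hLa]
  have hbase : -(x0 - m) / σ = L ^ (1/α) := by
    rw [hx0def]; field_simp; ring
  have hexp : Real.exp (-(L ^ (1/α)) ^ α) = p := by
    rw [one_div, Real.rpow_inv_rpow hLpos.le (ne_of_gt ha),
      hLdef, one_div, Real.log_inv, neg_neg, Real.exp_log hp0]
  have hFx0 : (μ {ω | X ω ≤ x0}).toReal = p := by
    rw [hcdf x0 hx0m, hbase, hexp]
  refine IsLeast.csInf_eq ⟨?_, ?_⟩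
  · show p ≤ _
    rw [hFx0]
  · intro y hy
    by_contra hlt
    push_neg at hlt
    have hym : y < m := hlt.trans hx0m
    have hy' : p ≤ Real.exp (-(-(y - m) / σ) ^ α) := by
      rw [← hcdf y hym]; exact hy
    have h1 : L ^ (1/α) < -(y - m) / σ := by
      rw [← hbase]
      rw [div_lt_div_iff_of_pos_right hs]
      simp only [hx0def] at hlt ⊢
      linarith
    have h2 : (L ^ (1/α)) ^ α < (-(y - m) / σ) ^ α :=
      Real.rpow_lt_rpow hLa.le h1 ha
    have h3 : Real.exp (-(-(y - m) / σ) ^ α) < p := by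
      rw [← hexp]
      exact Real.exp_lt_exp.mpr (by linarith)
    linarith


lemma negweib_strict (μ : Measure Ω) [IsProbabilityMeasure μ]
    (X : Ω → ℝ) (α m σ : ℝ) (ha : 0 < α) (hs : 0 < σ)
    (hcdf : ∀ x : ℝ, x < m →
      (μ {ω | X ω ≤ x}).toReal = Real.exp (-(-(x - m) / σ) ^ α))
    (x : ℝ) (hx : x < m) :
    (μ {ω | X ω < x}).toReal = Real.exp (-(-(x - m) / σ) ^ α) := by
  set c := (μ {ω | X ω < x}).toReal with hc
  have hfin : μ {ω | X ω < x} ≠ ⊤ := measure_ne_top μ _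
  have hupper : c ≤ Real.exp (-(-(x - m) / σ) ^ α) := by
    rw [← hcdf x hx]
    exact ENNReal.toReal_mono (measure_ne_top μ _)
      (measure_mono (fun ω (h : X ω < x) => le_of_lt h))
  have hlower : ∀ n : ℕ,
      Real.exp (-(-((x - 1/(n+1)) - m) / σ) ^ α) ≤ c := by
    intro n
    have hn : (0:ℝ) < 1/(n+1) := by positivity
    rw [← hcdf (x - 1/(n+1)) (by linarith)]
    exact ENNReal.toReal_mono hfin
      (measure_mono (fun ω (h : X ω ≤ x - 1/(n+1)) => lt_of_le_of_lt h (by linarith)))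
  have hg : ContinuousAt (fun y : ℝ => Real.exp (-(-(y - m) / σ) ^ α)) x := by
    have l1 : ContinuousAt (fun y : ℝ => -(y - m) / σ) x := by fun_prop
    have l2 : ContinuousAt (fun z : ℝ => z ^ α) (-(x - m) / σ) :=
      Real.continuousAt_rpow_const _ _ (Or.inr ha.le)
    have l3 : ContinuousAt (fun y : ℝ => (-(y - m) / σ) ^ α) x :=
      ContinuousAt.comp (g := fun z : ℝ => z ^ α) l2 l1
    exact Real.continuous_exp.continuousAt.comp l3.neg
  have h1 : Filter.Tendsto (fun n : ℕ => x - 1/(n+1)) Filter.atTop (nhds x) := by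
    have := tendsto_one_div_add_atTop_nhds_zero_nat (𝕜 := ℝ)
    have h2 := Filter.Tendsto.sub (tendsto_const_nhds (x := x) (f := Filter.atTop (α := ℕ))) this
    simpa using h2
  have hcont : Filter.Tendsto
      (fun n : ℕ => Real.exp (-(-((x - 1/(n+1)) - m) / σ) ^ α)) Filter.atTop
      (nhds (Real.exp (-(-(x - m) / σ) ^ α))) := by
    exact (hg.tendsto.comp h1)
  have hge := le_of_tendsto' hcont hlower
  linarith

theorem neg_weibull_peL (μ : Measure Ω) [IsProbabilityMeasure μ]
    (X : Ω → ℝ) (hX : Measurable X) (α m σ : ℝ) (ha : 0 < α) (hs : 0 < σ)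
    (hcdf : ∀ x : ℝ, x < m →
      (μ {ω | X ω ≤ x}).toReal = Real.exp (-(-(x - m) / σ) ^ α))
    (hhigh : ∀ x : ℝ, m ≤ x → (μ {ω | X ω ≤ x}).toReal = 1) :
    peL μ X = Real.exp
      (-(4 * (Real.log 4) ^ (1/α) - 3 * (Real.log (4/3)) ^ (1/α)) ^ α) := by
  set a := (Real.log 4) ^ (1/α) with hadef
  set b := (Real.log (4/3)) ^ (1/α) with hbdef
  have hb0 : 0 < b := Real.rpow_pos_of_pos (Real.log_pos (by norm_num)) _
  have hba : b < a := by
    rw [hadef, hbdef]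
    exact Real.rpow_lt_rpow (Real.log_nonneg (by norm_num))
      (Real.log_lt_log (by norm_num) (by norm_num)) (by positivity)
  have ht : 0 < 4 * a - 3 * b := by linarith
  have hQ1 : Q1 μ X = m - σ * a := by
    rw [Q1, negweib_quantile μ X α m σ ha hs hcdf (1/4) (by norm_num) (by norm_num)]
    norm_num [hadef]
  have hQ3 : Q3 μ X = m - σ * b := by
    rw [Q3, negweib_quantile μ X α m σ ha hs hcdf (3/4) (by norm_num) (by norm_num)]
    rw [hbdef]
    norm_num
  have hkey : Q1 μ X - 3 * IQR μ X = m - σ * (4 * a - 3 * b) := by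
    rw [IQR, hQ1, hQ3]; ring
  have hxm : m - σ * (4 * a - 3 * b) < m := by nlinarith
  rw [peL, hkey, negweib_strict μ X α m σ ha hs hcdf _ hxm]
  congr 1
  have : -(m - σ * (4 * a - 3 * b) - m) / σ = 4 * a - 3 * b := by
    field_simp; ring
  rw [this]
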